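/- For d ≥ 3, the ring A_d = ℤ[X,Y,Z]/(X(X+Y+dZ), Y(X+Y+dZ), Y(X+Z), Z²(X+Z), Z²X) (generators in degree 2) is not isomorphic as a graded ring to the cohomology ring of any connected sum decomposable quasitoric manifold over C³(6)*: there exists no basis {w₁, w₂, w₃} of the degree-2 part A_d² such that w₁w₂ = w₁w₃ = 0 and w₁³ generates the degree-6 part A_d⁶ ≅ ℤ. -/

import Mathlib

open MvPolynomial

/-- The defining ideal of `A_d = ℤ[X,Y,Z]/(X(X+Y+dZ), Y(X+Y+dZ), Y(X+Z), Z²(X+Z), Z²X)`. -/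
noncomputable def idealAd (d : ℤ) : Ideal (MvPolynomial (Fin 3) ℤ) :=
  Ideal.span {X 0 * (X 0 + X 1 + C d * X 2), X 1 * (X 0 + X 1 + C d * X 2),
    X 1 * (X 0 + X 2), X 2 ^ 2 * (X 0 + X 2), X 2 ^ 2 * X 0}

section ModelRing

@[simp] lemma vec8_0 {α : Type*} (a0 a1 a2 a3 a4 a5 a6 a7 : α) : (![a0,a1,a2,a3,a4,a5,a6,a7]) (0 : Fin 8) = a0 := rfl
@[simp] lemma vec8_1 {α : Type*} (a0 a1 a2 a3 a4 a5 a6 a7 : α) : (![a0,a1,a2,a3,a4,a5,a6,a7]) (1 : Fin 8) = a1 := rfl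
@[simp] lemma vec8_2 {α : Type*} (a0 a1 a2 a3 a4 a5 a6 a7 : α) : (![a0,a1,a2,a3,a4,a5,a6,a7]) (2 : Fin 8) = a2 := rfl
@[simp] lemma vec8_3 {α : Type*} (a0 a1 a2 a3 a4 a5 a6 a7 : α) : (![a0,a1,a2,a3,a4,a5,a6,a7]) (3 : Fin 8) = a3 := rfl
@[simp] lemma vec8_4 {α : Type*} (a0 a1 a2 a3 a4 a5 a6 a7 : α) : (![a0,a1,a2,a3,a4,a5,a6,a7]) (4 : Fin 8) = a4 := rfl
@[simp] lemma vec8_5 {α : Type*} (a0 a1 a2 a3 a4 a5 a6 a7 : α) : (![a0,a1,a2,a3,a4,a5,a6,a7]) (5 : Fin 8) = a5 := rfl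
@[simp] lemma vec8_6 {α : Type*} (a0 a1 a2 a3 a4 a5 a6 a7 : α) : (![a0,a1,a2,a3,a4,a5,a6,a7]) (6 : Fin 8) = a6 := rfl
@[simp] lemma vec8_7 {α : Type*} (a0 a1 a2 a3 a4 a5 a6 a7 : α) : (![a0,a1,a2,a3,a4,a5,a6,a7]) (7 : Fin 8) = a7 := rfl

/-- A model for the ring `A_d`: the free `ℤ`-module of rank 8 with ordered basis
`1, X, Y, Z, YZ, XZ, Z², YZ²`. -/
def Model (_d : ℤ) : Type := Fin 8 → ℤ

namespace Model

variable {d : ℤ}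

/-- Multiplication table of `A_d` in the basis `1, X, Y, Z, YZ, XZ, Z², YZ²`. -/
def mul' (d : ℤ) (x y : Fin 8 → ℤ) : Fin 8 → ℤ :=
  ![x 0 * y 0,
    x 0 * y 1 + x 1 * y 0,
    x 0 * y 2 + x 2 * y 0,
    x 0 * y 3 + x 3 * y 0,
    x 0 * y 4 + x 4 * y 0 + x 1 * y 1 - (x 1 * y 2 + x 2 * y 1)
      + (1 - d) * (x 2 * y 2) + (x 2 * y 3 + x 3 * y 2),
    x 0 * y 5 + x 5 * y 0 - d * (x 1 * y 1) + (x 1 * y 3 + x 3 * y 1),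
    x 0 * y 6 + x 6 * y 0 + x 3 * y 3,
    x 0 * y 7 + x 7 * y 0 - (x 1 * y 4 + x 4 * y 1) + (x 1 * y 5 + x 5 * y 1)
      + (1 - d) * (x 2 * y 4 + x 4 * y 2) - (x 2 * y 5 + x 5 * y 2)
      + (x 2 * y 6 + x 6 * y 2) + (x 3 * y 4 + x 4 * y 3)]

instance : AddCommGroup (Model d) := inferInstanceAs (AddCommGroup (Fin 8 → ℤ))

@[simp] lemma add_apply (x y : Model d) (i : Fin 8) : (x + y) i = x i + y i := rfl
@[simp] lemma zero_apply (i : Fin 8) : (0 : Model d) i = 0 := rfl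
@[simp] lemma neg_apply (x : Model d) (i : Fin 8) : (-x) i = -(x i) := rfl
@[simp] lemma sub_apply (x y : Model d) (i : Fin 8) : (x - y) i = x i - y i := rfl

set_option maxHeartbeats 1000000 in

lemma ext8 {x y : Model d} (h0 : x 0 = y 0) (h1 : x 1 = y 1) (h2 : x 2 = y 2)
    (h3 : x 3 = y 3) (h4 : x 4 = y 4) (h5 : x 5 = y 5) (h6 : x 6 = y 6)
    (h7 : x 7 = y 7) : x = y := by
  funext i
  fin_cases i
  · exact h0
  · exact h1
  · exact h2
  · exact h3
  · exact h4
  · exact h5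
  · exact h6
  · exact h7

instance : CommRing (Model d) :=
  { (inferInstanceAs (AddCommGroup (Model d)) : AddCommGroup (Model d)) with
    mul := mul' d
    one := ![1,0,0,0,0,0,0,0]
    natCast := fun n => ![(n : ℤ),0,0,0,0,0,0,0]
    intCast := fun z => ![z,0,0,0,0,0,0,0]
    natCast_zero := by
      apply ext8 (d := d) <;> (try rfl) <;> simp
    natCast_succ := by
      intro n
      apply ext8 (d := d) <;> (try rfl) <;> simp
    intCast_ofNat := by
      intro n
      apply ext8 (d := d) <;> (try rfl) <;> simp
    intCast_negSucc := by
      intro n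
      apply ext8 (d := d) <;> (try rfl) <;> simp
    mul_assoc := by
      intro a b c
      show mul' d (mul' d a b) c = mul' d a (mul' d b c)
      apply ext8 (d := d) <;>
        · simp only [mul', vec8_0, vec8_1, vec8_2, vec8_3, vec8_4, vec8_5, vec8_6, vec8_7]
          ring
    one_mul := by
      intro a
      show mul' d ![1,0,0,0,0,0,0,0] a = a
      apply ext8 (d := d) <;>
        · simp only [mul', vec8_0, vec8_1, vec8_2, vec8_3, vec8_4, vec8_5, vec8_6, vec8_7]
          ring
    mul_one := by
      intro a
      show mul' d a ![1,0,0,0,0,0,0,0] = a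
      apply ext8 (d := d) <;>
        · simp only [mul', vec8_0, vec8_1, vec8_2, vec8_3, vec8_4, vec8_5, vec8_6, vec8_7]
          ring
    left_distrib := by
      intro a b c
      show mul' d a (b + c) = mul' d a b + mul' d a c
      apply ext8 (d := d) <;>
        · simp only [mul', add_apply, Pi.add_apply, vec8_0, vec8_1, vec8_2, vec8_3, vec8_4, vec8_5, vec8_6,
            vec8_7]
          ring
    right_distrib := by
      intro a b c
      show mul' d (a + b) c = mul' d a c + mul' d b c
      apply ext8 (d := d) <;>
        · simp only [mul', add_apply, Pi.add_apply, vec8_0, vec8_1, vec8_2, vec8_3, vec8_4, vec8_5, vec8_6,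
            vec8_7]
          ring
    zero_mul := by
      intro a
      show mul' d 0 a = 0
      apply ext8 (d := d) <;>
        · simp only [mul', zero_apply, Pi.zero_apply, vec8_0, vec8_1, vec8_2, vec8_3, vec8_4, vec8_5, vec8_6,
            vec8_7]
          ring
    mul_zero := by
      intro a
      show mul' d a 0 = 0
      apply ext8 (d := d) <;>
        · simp only [mul', zero_apply, Pi.zero_apply, vec8_0, vec8_1, vec8_2, vec8_3, vec8_4, vec8_5, vec8_6,
            vec8_7]
          ring
    mul_comm := by
      intro a b
      show mul' d a b = mul' d b a
      apply ext8 (d := d) <;>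
        · simp only [mul', vec8_0, vec8_1, vec8_2, vec8_3, vec8_4, vec8_5, vec8_6, vec8_7]
          ring }

lemma mul_def (x y : Model d) : x * y = mul' d x y := rfl

lemma mul_apply' (x y : Model d) (i : Fin 8) : (x * y) i = mul' d x y i := rfl

lemma addApply (x y : Model d) (i : Fin 8) : (x + y) i = x i + y i := rfl
lemma zeroApply (i : Fin 8) : (0 : Model d) i = 0 := rfl
lemma negApply (x : Model d) (i : Fin 8) : (-x) i = -(x i) := rfl
lemma subApply (x y : Model d) (i : Fin 8) : (x - y) i = x i - y i := rfl

/-- the image of `X` -/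
def eX : Model d := ![0,1,0,0,0,0,0,0]
/-- the image of `Y` -/
def eY : Model d := ![0,0,1,0,0,0,0,0]
/-- the image of `Z` -/
def eZ : Model d := ![0,0,0,1,0,0,0,0]

/-- the evaluation map `ℤ[X,Y,Z] → Model d`. -/
noncomputable def psi (d : ℤ) : MvPolynomial (Fin 3) ℤ →+* Model d :=
  eval₂Hom (Int.castRingHom (Model d)) ![eX, eY, eZ]

lemma psi_X0 : psi d (X 0) = eX := by simp [psi]
lemma psi_X1 : psi d (X 1) = eY := by simp [psi]
lemma psi_X2 : psi d (X 2) = eZ := by simp [psi]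

lemma intCast_def (z : ℤ) : (z : Model d) = ![z,0,0,0,0,0,0,0] := rfl

lemma psi_vanish : ∀ p ∈ idealAd d, psi d p = 0 := by
  intro p hp
  have hle : idealAd d ≤ RingHom.ker (psi d) := by
    rw [idealAd, Ideal.span_le]
    rintro q hq
    simp only [Set.mem_insert_iff, Set.mem_singleton_iff] at hq
    have hC : psi d (C d) = (d : Model d) := by simp [psi]
    rcases hq with rfl | rfl | rfl | rfl | rfl <;>
      · rw [SetLike.mem_coe, RingHom.mem_ker]
        simp only [map_mul, map_add, map_pow, psi_X0, psi_X1, psi_X2, hC]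
        apply ext8 (d := d) <;>
          simp only [pow_two, mul_apply', mul', addApply, add_apply, Pi.add_apply, zeroApply,
            zero_apply, Pi.zero_apply, vec8_0, vec8_1, vec8_2, vec8_3, vec8_4, vec8_5, vec8_6, vec8_7] <;>
          simp only [pow_two, mul_def, mul', intCast_def, eX, eY, eZ, addApply, add_apply,
            Pi.add_apply, zeroApply, zero_apply, Pi.zero_apply, vec8_0, vec8_1, vec8_2, vec8_3,
            vec8_4, vec8_5, vec8_6, vec8_7] <;>
          ring
  exact hle hp

end Model

end ModelRing

private lemma d_not_unit {d k : ℤ} (hd : 3 ≤ d) (h : d * k = 1 ∨ d * k = -1) : False := by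
  rcases h with h | h
  · have h1 : d ∣ 1 := ⟨k, h.symm⟩
    have := Int.le_of_dvd one_pos h1
    omega
  · have h1 : d ∣ 1 := ⟨-k, by linarith⟩
    have := Int.le_of_dvd one_pos h1
    omega

set_option maxHeartbeats 1600000 in
theorem stmt_16 (d : ℤ) (hd : 3 ≤ d) :
    ¬ ∃ (w : Fin 3 → MvPolynomial (Fin 3) ℤ ⧸ idealAd d) (c : Matrix (Fin 3) (Fin 3) ℤ),
      IsUnit c.det ∧
      (∀ i, w i = ∑ j, c i j • Ideal.Quotient.mk (idealAd d) (X j)) ∧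
      w 0 * w 1 = 0 ∧ w 0 * w 2 = 0 ∧
      Submodule.span ℤ {w 0 ^ 3} =
        Submodule.span ℤ ((fun p => Ideal.Quotient.mk (idealAd d) p) ''
          {q | ∃ i j k : Fin 3, q = X i * X j * X k}) := by
  rintro ⟨w, c, hdet, hw, h01, h02, hspan⟩
  set mkq := Ideal.Quotient.mk (idealAd d) with hmkq
  set L : Fin 3 → MvPolynomial (Fin 3) ℤ := fun i => ∑ j, c i j • X j with hLdef
  have hwL : ∀ i, w i = mkq (L i) := by
    intro i
    rw [hw i, hLdef]
    simp only [map_sum, map_zsmul]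
  -- the two orthogonality relations, transported to the model
  have mem01 : L 0 * L 1 ∈ idealAd d := by
    rw [← Ideal.Quotient.eq_zero_iff_mem]
    show mkq (L 0 * L 1) = 0
    rw [map_mul, ← hwL 0, ← hwL 1]
    exact h01
  have mem02 : L 0 * L 2 ∈ idealAd d := by
    rw [← Ideal.Quotient.eq_zero_iff_mem]
    show mkq (L 0 * L 2) = 0
    rw [map_mul, ← hwL 0, ← hwL 2]
    exact h02
  -- the generator relation
  have hu : mkq (X 1 * X 2 * X 2) ∈ Submodule.span ℤ {w 0 ^ 3} := by
    rw [hspan]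
    exact Submodule.subset_span ⟨X 1 * X 2 * X 2, ⟨1, 2, 2, rfl⟩, rfl⟩
  obtain ⟨m, hm⟩ := Submodule.mem_span_singleton.mp hu
  have memc : m • (L 0 ^ 3) - X 1 * X 2 * X 2 ∈ idealAd d := by
    rw [← Ideal.Quotient.eq_zero_iff_mem]
    show mkq (m • (L 0 ^ 3) - X 1 * X 2 * X 2) = 0
    rw [map_sub, map_zsmul, map_pow, ← hwL 0, hm, sub_self]
  -- explicit model images
  have hpsiL : ∀ i, Model.psi d (L i) = ![0, c i 0, c i 1, c i 2, 0, 0, 0, 0] := by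
    intro i
    rw [hLdef]
    simp only [Fin.sum_univ_three, map_add, map_zsmul, map_mul, map_intCast,
      Model.psi_X0, Model.psi_X1, Model.psi_X2]
    apply Model.ext8 (d := d) <;>
      simp only [zsmul_eq_mul, Model.mul_apply', Model.mul', Model.addApply, Model.add_apply,
        vec8_0, vec8_1, vec8_2, vec8_3, vec8_4, vec8_5, vec8_6, vec8_7] <;>
      simp only [zsmul_eq_mul, Model.intCast_def, Model.mul_def, Model.mul', Model.addApply,
        Model.add_apply, Model.eX, Model.eY, Model.eZ, vec8_0, vec8_1, vec8_2, vec8_3, vec8_4, vec8_5, vec8_6,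
        vec8_7] <;>
      ring
  have hM01 : Model.mul' d ![0, c 0 0, c 0 1, c 0 2, 0, 0, 0, 0]
      ![0, c 1 0, c 1 1, c 1 2, 0, 0, 0, 0] = 0 := by
    have h := Model.psi_vanish (d := d) _ mem01
    rw [map_mul, hpsiL 0, hpsiL 1] at h
    exact h
  have hM02 : Model.mul' d ![0, c 0 0, c 0 1, c 0 2, 0, 0, 0, 0]
      ![0, c 2 0, c 2 1, c 2 2, 0, 0, 0, 0] = 0 := by
    have h := Model.psi_vanish (d := d) _ mem02
    rw [map_mul, hpsiL 0, hpsiL 2] at h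
    exact h
  -- component equations
  have h5a := congrFun hM01 5
  have h6a := congrFun hM01 6
  have h5b := congrFun hM02 5
  have h6b := congrFun hM02 6
  simp only [Model.mul', Model.zeroApply, Model.zero_apply, Pi.zero_apply, vec8_0, vec8_1, vec8_2, vec8_3,
    vec8_4, vec8_5, vec8_6, vec8_7] at h5a h6a h5b h6b
  have q5a : c 0 2 * c 1 0 + c 0 0 * c 1 2 - d * (c 0 0 * c 1 0) = 0 := by linear_combination h5a
  have q6a : c 0 2 * c 1 2 = 0 := by linear_combination h6a
  have q5b : c 0 2 * c 2 0 + c 0 0 * c 2 2 - d * (c 0 0 * c 2 0) = 0 := by linear_combination h5b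
  have q6b : c 0 2 * c 2 2 = 0 := by linear_combination h6b
  -- the cubic equation
  have hM3 : m • (Model.psi d (L 0)) ^ 3
      - Model.psi d (X 1) * Model.psi d (X 2) * Model.psi d (X 2) = 0 := by
    have h := Model.psi_vanish (d := d) _ memc
    rw [map_sub, map_zsmul, map_pow, map_mul, map_mul] at h
    exact h
  have h7 := congrFun hM3 7
  simp only [pow_succ, pow_zero, one_mul, zsmul_eq_mul, Model.mul_apply', Model.mul', Model.subApply,
    vec8_0, vec8_1, vec8_2, vec8_3, vec8_4, vec8_5, vec8_6, vec8_7] at h7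
  rw [hpsiL 0, Model.psi_X1, Model.psi_X2] at h7
  simp only [pow_succ, pow_zero, one_mul, zsmul_eq_mul, Model.intCast_def, Model.mul_def,
    Model.mul', Model.subApply, Model.sub_apply, Model.zeroApply, Model.zero_apply, Pi.zero_apply, Model.eY,
    Model.eZ, vec8_0, vec8_1, vec8_2, vec8_3, vec8_4, vec8_5, vec8_6, vec8_7] at h7
  have hN : m * ((c 0 0 ^ 2 - 2 * c 0 0 * c 0 1 + (1 - d) * c 0 1 ^ 2 + 2 * c 0 1 * c 0 2)
        * (-(c 0 0) + (1 - d) * c 0 1 + c 0 2)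
      + (-(d * c 0 0 ^ 2) + 2 * c 0 0 * c 0 2) * (c 0 0 - c 0 1)
      + c 0 2 ^ 2 * c 0 1) = 1 := by linear_combination h7
  -- the determinant
  rw [Matrix.det_fin_three] at hdet
  rcases Int.isUnit_iff.mp hdet with hdet1 | hdet1
  all_goals by_cases hg : c 0 2 = 0
  -- case γ = 0 (for both signs of the determinant)
  case pos | pos =>
    by_cases ha : c 0 0 = 0
    · rw [hg, ha] at hN
      have hdvd : (1 - d) ^ 2 ∣ 1 := ⟨m * c 0 1 ^ 3, by linear_combination -hN⟩
      have := Int.le_of_dvd one_pos hdvd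
      nlinarith [this, hd]
    · have hr : c 1 2 = d * c 1 0 := by
        rcases mul_eq_zero.mp (show c 0 0 * (c 1 2 - d * c 1 0) = 0 by
          linear_combination q5a - c 1 0 * hg) with h | h
        · exact absurd h ha
        · linarith
      have hs : c 2 2 = d * c 2 0 := by
        rcases mul_eq_zero.mp (show c 0 0 * (c 2 2 - d * c 2 0) = 0 by
          linear_combination q5b - c 2 0 * hg) with h | h
        · exact absurd h ha
        · linarith
      rw [hg, hr, hs] at hdet1
      refine d_not_unit (k := c 0 0 * (c 1 1 * c 2 0 - c 1 0 * c 2 1)) hd ?_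
      first
      | exact Or.inl (by linear_combination hdet1)
      | exact Or.inr (by linear_combination hdet1)
  -- case γ ≠ 0
  all_goals {
    have hr : c 1 2 = 0 := by
      rcases mul_eq_zero.mp q6a with h | h
      · exact absurd h hg
      · exact h
    have hs : c 2 2 = 0 := by
      rcases mul_eq_zero.mp q6b with h | h
      · exact absurd h hg
      · exact h
    by_cases hga : c 0 2 = d * c 0 0
    · rw [hr, hs, hga] at hdet1
      refine d_not_unit (k := c 0 0 * (c 1 0 * c 2 1 - c 1 1 * c 2 0)) hd ?_
      first
      | exact Or.inl (by linear_combination hdet1)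
      | exact Or.inr (by linear_combination hdet1)
    · have hp : c 1 0 = 0 := by
        rcases mul_eq_zero.mp (show (c 0 2 - d * c 0 0) * c 1 0 = 0 by
          linear_combination q5a - c 0 0 * hr) with h | h
        · exact absurd (by linarith : c 0 2 = d * c 0 0) hga
        · exact h
      have hq : c 2 0 = 0 := by
        rcases mul_eq_zero.mp (show (c 0 2 - d * c 0 0) * c 2 0 = 0 by
          linear_combination q5b - c 0 0 * hs) with h | h
        · exact absurd (by linarith : c 0 2 = d * c 0 0) hga
        · exact h
      rw [hr, hs, hp, hq] at hdet1
      simp at hdet1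
  }
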